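/- Let T be a finite tree rooted at connecting node c, and let a finite set of agents occupy distinct vertices of T. Suppose one agent a* has strictly highest priority and at each timestep the highest-priority agent moves one edge toward c, pushing any agent on its next vertex one edge toward c as well (all pushed agents move simultaneously, preserving distinctness of positions). Then after at most dist(v*, c) timesteps, where v* is a*'s initial vertex, agent a* is at c, and throughout, no two agents ever occupy the same vertex. -/
import Mathlib

/-- Pusher-chain predicate: `chainC pos astar t k b` means `b` is the `k`-th agent in the
push chain starting from `astar` at timestep `t`. -/
def chainC {V A : Type*} (pos : A → ℕ → V) (astar : A) (t : ℕ) : ℕ → A → Prop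
  | 0, b => b = astar
  | (k+1), b => pos b (t+1) ≠ pos b t ∧
      ∃ p, p ≠ b ∧ chainC pos astar t k p ∧ pos p (t+1) = pos b t

/-- In a finite tree rooted at c with agents at distinct vertices, if the
highest-priority agent a* moves one edge toward c each timestep (staying once at c), and
other agents move one edge toward c exactly when another agent moves onto their vertex
(the push chain), then a* reaches c after at most dist(v*, c) timesteps, and no two agents
ever occupy the same vertex. -/
theorem stmt_11 {V : Type*} [Fintype V] {A : Type*} [Fintype A]
    (G : SimpleGraph V) (hT : G.IsTree) (c : V)
    (pos : A → ℕ → V) (hinit : Function.Injective (fun b => pos b 0))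
    (astar : A)
    (hastar_move : ∀ t, pos astar t ≠ c →
      G.Adj (pos astar t) (pos astar (t + 1)) ∧
      G.dist (pos astar (t + 1)) c + 1 = G.dist (pos astar t) c)
    (hastar_stay : ∀ t, pos astar t = c → pos astar (t + 1) = c)
    (hothers : ∀ t b, pos b (t + 1) = pos b t ∨
      (G.Adj (pos b t) (pos b (t + 1)) ∧ G.dist (pos b (t + 1)) c + 1 = G.dist (pos b t) c))
    (hpush : ∀ t b, pos b (t + 1) ≠ pos b t ↔
      (b = astar ∧ pos b t ≠ c) ∨ ∃ b', b' ≠ b ∧ pos b' (t + 1) = pos b t) :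
    pos astar (G.dist (pos astar 0) c) = c ∧
      ∀ t, Function.Injective (fun b => pos b t) := by
  classical
  have hconn : G.Connected := hT.isConnected
  have hlt : ∀ u : V, G.dist u c < Fintype.card V := by
    intro u
    obtain ⟨w⟩ := hconn.preconnected u c
    calc G.dist u c ≤ w.toPath.1.length := SimpleGraph.dist_le _
      _ < Fintype.card V := w.toPath.2.length_lt
  -- injectivity at all times
  have hinj : ∀ t, Function.Injective (fun b => pos b t) := by
    intro t
    induction t with
    | zero => exact hinit
    | succ t ih =>
      have hmovedP : ∀ p b : A, p ≠ b → pos p (t+1) = pos b t →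
          pos p (t+1) ≠ pos p t := by
        intro p b hne heq hstay
        exact hne (ih (show (fun x => pos x t) p = (fun x => pos x t) b from
          by simpa using hstay ▸ heq))
      have hdrop : ∀ b : A, pos b (t+1) ≠ pos b t →
          G.dist (pos b (t+1)) c + 1 = G.dist (pos b t) c := by
        intro b hm
        rcases hothers t b with h | h
        · exact absurd h hm
        · exact h.2
      have hE : ∀ k b, chainC pos astar t k b →
          G.dist (pos astar t) c = G.dist (pos b t) c + k := by
        intro k
        induction k with
        | zero => intro b hb; rw [show b = astar from hb]; omega
        | succ k ihk =>
          intro b hb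
          obtain ⟨hm, p, hpb, hck, hpp⟩ := hb
          have hmp : pos p (t+1) ≠ pos p t := hmovedP p b hpb hpp
          have h1 := hdrop p hmp
          rw [hpp] at h1
          have h2 := ihk p hck
          omega
      have hD : ∀ k b b', chainC pos astar t k b → chainC pos astar t k b' → b = b' := by
        intro k
        induction k with
        | zero =>
          intro b b' hb hb'
          rw [show b = astar from hb, show b' = astar from hb']
        | succ k ihk =>
          intro b b' hb hb'
          obtain ⟨_, p, _, hck, hpp⟩ := hb
          obtain ⟨_, p', _, hck', hpp'⟩ := hb'
          have hpe : p = p' := ihk p p' hck hck'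
          subst hpe
          exact ih (show (fun x => pos x t) b = (fun x => pos x t) b' from
            by simpa using hpp.symm.trans hpp')
      have hK : ∀ n b, Fintype.card V ≤ G.dist (pos b t) c + n →
          pos b (t+1) ≠ pos b t → ∃ k, chainC pos astar t k b := by
        intro n
        induction n with
        | zero =>
          intro b hn _
          exact absurd hn (by have := hlt (pos b t); omega)
        | succ n ihn =>
          intro b hn hm
          rcases (hpush t b).mp hm with ⟨hb, _⟩ | ⟨p, hpb, hpp⟩
          · exact ⟨0, hb⟩
          · have hmp : pos p (t+1) ≠ pos p t := hmovedP p b hpb hpp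
            have h1 := hdrop p hmp
            rw [hpp] at h1
            obtain ⟨k, hc⟩ := ihn p (by omega) hmp
            exact ⟨k+1, hm, p, hpb, hc, hpp⟩
      intro b b' heq
      simp only at heq
      by_contra hne
      by_cases hm : pos b (t+1) = pos b t
      · by_cases hm' : pos b' (t+1) = pos b' t
        · exact hne (ih (show (fun x => pos x t) b = (fun x => pos x t) b' from
            by simpa using hm.symm.trans (heq.trans hm')))
        ·
          -- then b' is an agent ≠ b with pos b' (t+1) = pos b t, so b must have moved
          exact ((hpush t b).mpr (Or.inr ⟨b', Ne.symm hne, heq.symm.trans hm⟩)) hm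
      · by_cases hm' : pos b' (t+1) = pos b' t
        · exact ((hpush t b').mpr (Or.inr ⟨b, hne, heq.trans hm'⟩)) hm'
        · -- both moved
          obtain ⟨k, hc⟩ := hK (Fintype.card V) b (by omega) hm
          obtain ⟨k', hc'⟩ := hK (Fintype.card V) b' (by omega) hm'
          have e1 := hE k b hc
          have e2 := hE k' b' hc'
          have d1 := hdrop b hm
          have d2 := hdrop b' hm'
          rw [heq] at d1
          have hkk : k = k' := by omega
          subst hkk
          exact hne (hD k b b' hc hc')
  refine ⟨?_, hinj⟩
  have hprog : ∀ t, pos astar t = c ∨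
      G.dist (pos astar t) c + t = G.dist (pos astar 0) c := by
    intro t
    induction t with
    | zero => right; rfl
    | succ t ih =>
      by_cases h : pos astar t = c
      · left; exact hastar_stay t h
      · rcases ih with h0 | h0
        · exact absurd h0 h
        · right
          have := (hastar_move t h).2
          omega
  rcases hprog (G.dist (pos astar 0) c) with h | h
  · exact h
  · have hz : G.dist (pos astar (G.dist (pos astar 0) c)) c = 0 := by omega
    exact hconn.dist_eq_zero_iff.mp hz
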